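/- Let X be a Haar system space, and let ℱ be the σ-algebra generated by a finite partition {A₁,…,Aₙ} of [0,1) where each A_i is a finite union of dyadic intervals. Then for every x in the span of the Haar system, ‖𝔼^ℱ x‖_X ≤ ‖x‖_X. -/

import Mathlib

open MeasureTheory

/-- The dyadic interval `[i / 2 ^ n, (i + 1) / 2 ^ n) ⊆ [0,1)`. -/
noncomputable def dyadicI (n i : ℕ) : Set ℝ :=
  Set.Ico ((i : ℝ) / 2 ^ n) ((i + 1 : ℝ) / 2 ^ n)

/-- The linear span `H` of the indicators of dyadic intervals (equivalently, of the
Haar system). -/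
noncomputable def HaarSpan : Submodule ℝ (ℝ → ℝ) :=
  Submodule.span ℝ
    {f | ∃ n i : ℕ, i < 2 ^ n ∧ f = (dyadicI n i).indicator (fun _ => (1 : ℝ))}

/-- Let `X` be a Haar system space (with rearrangement-invariant norm `N`, normalized so
that `N(χ_{[0,1)}) = 1`), and let `ℱ` be the σ-algebra generated by a finite partition
`{A₁, …, Aₙ}` of `[0,1)`, each `A i` a finite union of dyadic intervals.  Then for every
`x ∈ H`, the conditional expectation `𝔼^ℱ x` satisfies `N (𝔼^ℱ x) ≤ N x`. -/
lemma mem_dyadicI {m j : ℕ} {t : ℝ} (ht : 0 ≤ t) :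
    t ∈ dyadicI m j ↔ ⌊t * 2 ^ m⌋₊ = j := by
  have h2 : (0:ℝ) < 2 ^ m := by positivity
  rw [dyadicI, Set.mem_Ico, div_le_iff₀ h2, lt_div_iff₀ h2,
    Nat.floor_eq_iff (by positivity)]

lemma not_mem_dyadicI {m j : ℕ} {t : ℝ} (ht : t < 0) : t ∉ dyadicI m j := by
  rw [dyadicI, Set.mem_Ico]
  rintro ⟨h1, -⟩
  have : (0:ℝ) ≤ (j:ℝ) / 2 ^ m := by positivity
  linarith

lemma dyadicI_subset_Ico {m j : ℕ} (hj : j < 2 ^ m) : dyadicI m j ⊆ Set.Ico (0:ℝ) 1 := by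
  intro t ht
  have h2 : (0:ℝ) < 2 ^ m := by positivity
  rcases ht with ⟨h1, h3⟩
  constructor
  · have : (0:ℝ) ≤ (j:ℝ) / 2 ^ m := by positivity
    linarith
  · have hj' : (j:ℝ) + 1 ≤ 2 ^ m := by exact_mod_cast Nat.succ_le_of_lt hj
    have : ((j:ℝ)+1)/2^m ≤ 1 := by rw [div_le_one h2]; linarith
    linarith

lemma mem_Ico_iff_floor {m : ℕ} {t : ℝ} (ht : 0 ≤ t) :
    t ∈ Set.Ico (0:ℝ) 1 ↔ ⌊t * 2 ^ m⌋₊ < 2 ^ m := by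
  have h2 : (0:ℝ) < 2 ^ m := by positivity
  rw [Set.mem_Ico, Nat.floor_lt (by positivity)]
  constructor
  · rintro ⟨-, h⟩; push_cast; nlinarith
  · intro h; refine ⟨ht, ?_⟩; push_cast at h; nlinarith

lemma volume_dyadicI (m j : ℕ) : volume (dyadicI m j) = ENNReal.ofReal ((2 ^ m : ℝ)⁻¹) := by
  rw [dyadicI, Real.volume_Ico]
  congr 1
  field_simp
  ring

lemma disjoint_dyadicI {m j j' : ℕ} (h : j ≠ j') : Disjoint (dyadicI m j) (dyadicI m j') := by
  rw [Set.disjoint_left]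
  intro t ht ht'
  have h0 : 0 ≤ t := by
    by_contra hc
    exact not_mem_dyadicI (lt_of_not_ge hc) ht
  rw [mem_dyadicI h0] at ht ht'
  exact h (ht ▸ ht')

lemma measurable_dyadicI (m j : ℕ) : MeasurableSet (dyadicI m j) := measurableSet_Ico

noncomputable def Step (m : ℕ) (c : ℕ → ℝ) : ℝ → ℝ :=
  fun t => ∑ j ∈ Finset.range (2 ^ m), (dyadicI m j).indicator (fun _ => c j) t

lemma step_apply (m : ℕ) (c : ℕ → ℝ) (t : ℝ) :
    Step m c t = if t ∈ Set.Ico (0:ℝ) 1 then c ⌊t * 2 ^ m⌋₊ else 0 := by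
  rcases lt_or_ge t 0 with ht | ht
  · rw [if_neg (by rintro ⟨h, -⟩; linarith)]
    apply Finset.sum_eq_zero
    intro j _
    exact Set.indicator_of_notMem (not_mem_dyadicI ht) _
  · have hind : ∀ j, (dyadicI m j).indicator (fun _ => c j) t
        = if ⌊t * 2 ^ m⌋₊ = j then c j else 0 := by
      intro j
      by_cases h : t ∈ dyadicI m j
      · rw [Set.indicator_of_mem h, if_pos ((mem_dyadicI ht).mp h)]
      · rw [Set.indicator_of_notMem h, if_neg (fun hc => h ((mem_dyadicI ht).mpr hc))]
    rw [Step]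
    simp only [hind]
    rw [Finset.sum_ite_eq (Finset.range (2^m)) (⌊t * 2 ^ m⌋₊) c]
    by_cases hK : ⌊t * 2 ^ m⌋₊ < 2 ^ m
    · rw [if_pos (Finset.mem_range.mpr hK), if_pos ((mem_Ico_iff_floor ht).mpr hK)]
    · rw [if_neg (fun hc => hK (Finset.mem_range.mp hc)),
        if_neg (fun hc => hK ((mem_Ico_iff_floor ht).mp hc))]

lemma step_mem_HaarSpan (m : ℕ) (c : ℕ → ℝ) : Step m c ∈ HaarSpan := by
  have : Step m c = ∑ j ∈ Finset.range (2 ^ m),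
      c j • (dyadicI m j).indicator (fun _ => (1:ℝ)) := by
    funext t
    rw [Step, Finset.sum_apply]
    congr 1
    funext j
    simp [Set.indicator]
  rw [this]
  apply Submodule.sum_mem
  intro j hj
  exact Submodule.smul_mem _ _ (Submodule.subset_span ⟨m, j, Finset.mem_range.mp hj, rfl⟩)

lemma step_refine {m m' : ℕ} (h : m ≤ m') (c : ℕ → ℝ) :
    Step m c = Step m' (fun j => c (j / 2 ^ (m' - m))) := by
  funext t
  rw [step_apply, step_apply]
  by_cases ht : t ∈ Set.Ico (0:ℝ) 1
  · rw [if_pos ht, if_pos ht]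
    congr 1
    have h0 : (0:ℝ) ≤ t := ht.1
    have : t * 2 ^ m' / (2 ^ (m' - m) : ℕ) = t * 2 ^ m := by
      push_cast
      rw [div_eq_iff (by positivity), mul_assoc, ← pow_add]
      congr 2
      omega
    rw [← Nat.floor_div_natCast (t * 2 ^ m') (2 ^ (m' - m)), this]
  · rw [if_neg ht, if_neg ht]

lemma step_add (m : ℕ) (c c' : ℕ → ℝ) :
    Step m c + Step m c' = Step m (fun j => c j + c' j) := by
  funext t
  simp only [Pi.add_apply, step_apply]
  by_cases ht : t ∈ Set.Ico (0:ℝ) 1 <;> simp [ht]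

lemma step_smul (m : ℕ) (a : ℝ) (c : ℕ → ℝ) :
    a • Step m c = Step m (fun j => a * c j) := by
  funext t
  simp only [Pi.smul_apply, smul_eq_mul, step_apply]
  by_cases ht : t ∈ Set.Ico (0:ℝ) 1 <;> simp [ht]

lemma exists_step {x : ℝ → ℝ} (hx : x ∈ HaarSpan) : ∃ m c, x = Step m c := by
  refine Submodule.span_induction ?_ ?_ ?_ ?_ hx
  · rintro f ⟨n, i, hi, rfl⟩
    refine ⟨n, fun j => if j = i then 1 else 0, ?_⟩
    funext t
    rw [step_apply]
    by_cases ht : t ∈ Set.Ico (0:ℝ) 1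
    · rw [if_pos ht]
      by_cases h : t ∈ dyadicI n i
      · rw [Set.indicator_of_mem h, if_pos ((mem_dyadicI ht.1).mp h)]
      · rw [Set.indicator_of_notMem h,
          if_neg (fun hc => h ((mem_dyadicI ht.1).mpr hc))]
    · rw [if_neg ht]
      have : t ∉ dyadicI n i := by
        intro hc
        exact ht (dyadicI_subset_Ico hi hc)
      rw [Set.indicator_of_notMem this]
  · exact ⟨0, fun _ => 0, by funext t; rw [step_apply]; simp⟩
  · rintro f g - - ⟨m, c, rfl⟩ ⟨m', c', rfl⟩
    refine ⟨max m m', fun j => c (j / 2 ^ (max m m' - m)) + c' (j / 2 ^ (max m m' - m')), ?_⟩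
    rw [step_refine (le_max_left m m') c, step_refine (le_max_right m m') c',
      step_add]
  · rintro a f - ⟨m, c, rfl⟩
    exact ⟨m, fun j => a * c j, step_smul m a c⟩

lemma integrable_step (m : ℕ) (c : ℕ → ℝ) : Integrable (Step m c) := by
  apply integrable_finset_sum
  intro j _
  rw [integrable_indicator_iff (measurable_dyadicI m j)]
  refine integrableOn_const ?_
  rw [volume_dyadicI]
  exact ENNReal.ofReal_ne_top

lemma integral_step_dyadic {m j : ℕ} (hj : j < 2 ^ m) (c : ℕ → ℝ) :
    ∫ t in dyadicI m j, Step m c t = c j * (2 ^ m : ℝ)⁻¹ := by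
  have heq : Set.EqOn (Step m c) (fun _ => c j) (dyadicI m j) := by
    intro t ht
    have h0 : 0 ≤ t := (dyadicI_subset_Ico hj ht).1
    rw [step_apply, if_pos (dyadicI_subset_Ico hj ht), (mem_dyadicI h0).mp ht]
  rw [setIntegral_congr_fun (measurable_dyadicI m j) heq, setIntegral_const,
    Measure.real, volume_dyadicI, smul_eq_mul, mul_comm]
  congr 1
  rw [ENNReal.toReal_ofReal (by positivity)]

lemma sublevel_eq (m : ℕ) (c : ℕ → ℝ) (a : ℝ) :
    {t ∈ Set.Ico (0:ℝ) 1 | a < |Step m c t|} =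
      ⋃ j ∈ (Finset.range (2 ^ m)).filter (fun j => a < |c j|), dyadicI m j := by
  ext t
  simp only [Set.mem_setOf_eq, Set.mem_iUnion, Finset.mem_filter, Finset.mem_range,
    exists_prop]
  constructor
  · rintro ⟨ht, ha⟩
    refine ⟨⌊t * 2 ^ m⌋₊, ⟨(mem_Ico_iff_floor ht.1).mp ht, ?_⟩, ?_⟩
    · rwa [step_apply, if_pos ht] at ha
    · exact (mem_dyadicI ht.1).mpr rfl
  · rintro ⟨j, ⟨hj, ha⟩, htj⟩
    have ht : t ∈ Set.Ico (0:ℝ) 1 := dyadicI_subset_Ico hj htj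
    refine ⟨ht, ?_⟩
    rw [step_apply, if_pos ht, (mem_dyadicI ht.1).mp htj]
    exact ha

lemma volume_sublevel (m : ℕ) (c : ℕ → ℝ) (a : ℝ) :
    volume {t ∈ Set.Ico (0:ℝ) 1 | a < |Step m c t|} =
      ((Finset.range (2 ^ m)).filter (fun j => a < |c j|)).card
        * ENNReal.ofReal ((2 ^ m : ℝ)⁻¹) := by
  rw [sublevel_eq, measure_biUnion_finset ?_ (fun j _ => measurable_dyadicI m j)]
  · simp only [volume_dyadicI]
    rw [Finset.sum_const, nsmul_eq_mul]
  · intro j _ j' _ hjj'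
    exact disjoint_dyadicI hjj'

lemma N_step_eq (N : (ℝ → ℝ) → ℝ)
    (hdist : ∀ f g : ℝ → ℝ, f ∈ HaarSpan → g ∈ HaarSpan →
      (∀ a : ℝ, volume {t ∈ Set.Ico (0 : ℝ) 1 | a < |f t|} =
        volume {t ∈ Set.Ico (0 : ℝ) 1 | a < |g t|}) → N f = N g)
    (m : ℕ) (c c' : ℕ → ℝ)
    (hcard : ∀ a : ℝ, ((Finset.range (2 ^ m)).filter (fun j => a < |c j|)).card =
      ((Finset.range (2 ^ m)).filter (fun j => a < |c' j|)).card) :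
    N (Step m c) = N (Step m c') := by
  apply hdist _ _ (step_mem_HaarSpan m c) (step_mem_HaarSpan m c')
  intro a
  rw [volume_sublevel, volume_sublevel, hcard a]

noncomputable def rot (S : Finset ℕ) (r : ℕ) (j : ℕ) : ℕ :=
  if h : j ∈ S then
    ((S.orderIsoOfFin rfl) ((S.orderIsoOfFin rfl).symm ⟨j, h⟩ +
      ⟨r % S.card, Nat.mod_lt _ (Finset.card_pos.mpr ⟨j, h⟩)⟩) : ℕ)
  else j

noncomputable def rot' (S : Finset ℕ) (r : ℕ) (j : ℕ) : ℕ :=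
  if h : j ∈ S then
    ((S.orderIsoOfFin rfl) ((S.orderIsoOfFin rfl).symm ⟨j, h⟩ -
      ⟨r % S.card, Nat.mod_lt _ (Finset.card_pos.mpr ⟨j, h⟩)⟩) : ℕ)
  else j

lemma rot_mem {S : Finset ℕ} {j : ℕ} (r : ℕ) (h : j ∈ S) : rot S r j ∈ S := by
  rw [rot, dif_pos h]; exact Finset.coe_mem _

lemma rot'_mem {S : Finset ℕ} {j : ℕ} (r : ℕ) (h : j ∈ S) : rot' S r j ∈ S := by
  rw [rot', dif_pos h]; exact Finset.coe_mem _

lemma rot_not_mem {S : Finset ℕ} {j : ℕ} (r : ℕ) (h : j ∉ S) : rot S r j = j := by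
  rw [rot, dif_neg h]

lemma rot'_not_mem {S : Finset ℕ} {j : ℕ} (r : ℕ) (h : j ∉ S) : rot' S r j = j := by
  rw [rot', dif_neg h]

lemma rot'_rot (S : Finset ℕ) (r j : ℕ) : rot' S r (rot S r j) = j := by
  by_cases h : j ∈ S
  · haveI : NeZero S.card := ⟨(Finset.card_pos.mpr ⟨j, h⟩).ne'⟩
    have h1 : rot S r j ∈ S := rot_mem r h
    rw [rot', dif_pos h1]
    have h2 : (⟨rot S r j, h1⟩ : {y // y ∈ S}) =
        (S.orderIsoOfFin rfl) ((S.orderIsoOfFin rfl).symm ⟨j, h⟩ +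
          ⟨r % S.card, Nat.mod_lt _ (Finset.card_pos.mpr ⟨j, h⟩)⟩) := by
      apply Subtype.ext
      show rot S r j = _
      rw [rot, dif_pos h]
    rw [h2, OrderIso.symm_apply_apply, add_sub_cancel_right, OrderIso.apply_symm_apply]
  · rw [rot_not_mem r h, rot'_not_mem r h]

lemma rot_rot' (S : Finset ℕ) (r j : ℕ) : rot S r (rot' S r j) = j := by
  by_cases h : j ∈ S
  · haveI : NeZero S.card := ⟨(Finset.card_pos.mpr ⟨j, h⟩).ne'⟩
    have h1 : rot' S r j ∈ S := rot'_mem r h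
    rw [rot, dif_pos h1]
    have h2 : (⟨rot' S r j, h1⟩ : {y // y ∈ S}) =
        (S.orderIsoOfFin rfl) ((S.orderIsoOfFin rfl).symm ⟨j, h⟩ -
          ⟨r % S.card, Nat.mod_lt _ (Finset.card_pos.mpr ⟨j, h⟩)⟩) := by
      apply Subtype.ext
      show rot' S r j = _
      rw [rot', dif_pos h]
    rw [h2, OrderIso.symm_apply_apply, sub_add_cancel, OrderIso.apply_symm_apply]
  · rw [rot'_not_mem r h, rot_not_mem r h]

lemma sum_rot {S : Finset ℕ} {j : ℕ} (h : j ∈ S) (c : ℕ → ℝ) :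
    ∑ r ∈ Finset.range S.card, c (rot S r j) = ∑ j' ∈ S, c j' := by
  haveI : NeZero S.card := ⟨(Finset.card_pos.mpr ⟨j, h⟩).ne'⟩
  rw [← Fin.sum_univ_eq_sum_range (fun r => c (rot S r j)) S.card]
  have h1 : ∀ i : Fin S.card, rot S (i : ℕ) j =
      ((S.orderIsoOfFin rfl) ((S.orderIsoOfFin rfl).symm ⟨j, h⟩ + i) : ℕ) := by
    intro i
    rw [rot, dif_pos h]
    have h2 : (⟨(i : ℕ) % S.card, Nat.mod_lt _ (Finset.card_pos.mpr ⟨j, h⟩)⟩ : Fin S.card) = i :=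
      Fin.ext (Nat.mod_eq_of_lt i.isLt)
    rw [h2]
  simp only [h1]
  rw [Fintype.sum_equiv (Equiv.addLeft ((S.orderIsoOfFin rfl).symm ⟨j, h⟩))
    (fun x => c (((S.orderIsoOfFin rfl) ((S.orderIsoOfFin rfl).symm ⟨j, h⟩ + x) : ℕ)))
    (fun v => c (((S.orderIsoOfFin rfl) v : ℕ))) (fun x => rfl)]
  rw [Fintype.sum_equiv (S.orderIsoOfFin rfl).toEquiv
    (fun v => c (((S.orderIsoOfFin rfl) v : ℕ))) (fun s : {y // y ∈ S} => c s) (fun x => rfl)]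
  exact Finset.sum_coe_sort S c

noncomputable def blockAvg (S : Finset ℕ) (c : ℕ → ℝ) : ℕ → ℝ :=
  fun j => if j ∈ S then (∑ j' ∈ S, c j') / S.card else c j

lemma card_filter_rot {m : ℕ} {S : Finset ℕ} (hsub : S ⊆ Finset.range (2 ^ m))
    (r : ℕ) (c : ℕ → ℝ) (a : ℝ) :
    ((Finset.range (2 ^ m)).filter (fun j => a < |c (rot S r j)|)).card =
      ((Finset.range (2 ^ m)).filter (fun j => a < |c j|)).card := by
  have hmem : ∀ j, j ∈ Finset.range (2 ^ m) → rot S r j ∈ Finset.range (2 ^ m) := by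
    intro j hj
    by_cases h : j ∈ S
    · exact hsub (rot_mem r h)
    · rwa [rot_not_mem r h]
  have hmem' : ∀ j, j ∈ Finset.range (2 ^ m) → rot' S r j ∈ Finset.range (2 ^ m) := by
    intro j hj
    by_cases h : j ∈ S
    · exact hsub (rot'_mem r h)
    · rwa [rot'_not_mem r h]
  apply Finset.card_nbij' (rot S r) (rot' S r)
  · intro j hj
    rw [Finset.mem_coe, Finset.mem_filter] at hj ⊢
    exact ⟨hmem j hj.1, hj.2⟩
  · intro j hj
    rw [Finset.mem_coe, Finset.mem_filter] at hj ⊢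
    refine ⟨hmem' j hj.1, ?_⟩
    rw [rot_rot']
    exact hj.2
  · intro j _
    exact rot'_rot S r j
  · intro j _
    exact rot_rot' S r j

lemma step_blockAvg {m : ℕ} {S : Finset ℕ} (hS : S.Nonempty) (c : ℕ → ℝ) :
    Step m (blockAvg S c) =
      ((S.card : ℝ)⁻¹) • ∑ r ∈ Finset.range S.card, Step m (fun j => c (rot S r j)) := by
  have hk : (0:ℝ) < S.card := by exact_mod_cast Finset.card_pos.mpr hS
  funext t
  rw [Pi.smul_apply, Finset.sum_apply, smul_eq_mul]
  simp only [step_apply]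
  by_cases ht : t ∈ Set.Ico (0:ℝ) 1
  · simp only [if_pos ht]
    set K := ⌊t * 2 ^ m⌋₊
    by_cases hK : K ∈ S
    · rw [blockAvg, if_pos hK, sum_rot hK c]
      field_simp
    · rw [blockAvg, if_neg hK]
      have : ∀ r ∈ Finset.range S.card, c (rot S r K) = c K := by
        intro r _
        rw [rot_not_mem r hK]
      rw [Finset.sum_congr rfl this, Finset.sum_const, Finset.card_range, nsmul_eq_mul]
      field_simp
  · simp only [if_neg ht, Finset.sum_const_zero, mul_zero]

lemma N_zero (N : (ℝ → ℝ) → ℝ) (hsmul : ∀ (a : ℝ) (f : ℝ → ℝ), N (a • f) = |a| * N f) :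
    N 0 = 0 := by
  have := hsmul 0 0
  rwa [zero_smul, abs_zero, zero_mul] at this

lemma N_sum_le (N : (ℝ → ℝ) → ℝ)
    (hadd : ∀ f g : ℝ → ℝ, N (f + g) ≤ N f + N g)
    (hsmul : ∀ (a : ℝ) (f : ℝ → ℝ), N (a • f) = |a| * N f)
    (s : Finset ℕ) (f : ℕ → (ℝ → ℝ)) :
    N (∑ r ∈ s, f r) ≤ ∑ r ∈ s, N (f r) := by
  induction s using Finset.induction_on with
  | empty => simp [N_zero N hsmul]
  | insert _ _ h ih =>
    rename_i a s
    rw [Finset.sum_insert h, Finset.sum_insert h]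
    exact le_trans (hadd _ _) (by linarith)

lemma N_blockAvg_le (N : (ℝ → ℝ) → ℝ)
    (hadd : ∀ f g : ℝ → ℝ, N (f + g) ≤ N f + N g)
    (hsmul : ∀ (a : ℝ) (f : ℝ → ℝ), N (a • f) = |a| * N f)
    (hdist : ∀ f g : ℝ → ℝ, f ∈ HaarSpan → g ∈ HaarSpan →
      (∀ a : ℝ, volume {t ∈ Set.Ico (0 : ℝ) 1 | a < |f t|} =
        volume {t ∈ Set.Ico (0 : ℝ) 1 | a < |g t|}) → N f = N g)
    {m : ℕ} {S : Finset ℕ} (hsub : S ⊆ Finset.range (2 ^ m)) (c : ℕ → ℝ) :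
    N (Step m (blockAvg S c)) ≤ N (Step m c) := by
  rcases S.eq_empty_or_nonempty with rfl | hS
  · have : blockAvg ∅ c = c := by
      funext j
      rw [blockAvg, if_neg (Finset.notMem_empty j)]
    rw [this]
  · have hk : (0:ℝ) < S.card := by exact_mod_cast Finset.card_pos.mpr hS
    rw [step_blockAvg hS c, hsmul]
    have h1 : N (∑ r ∈ Finset.range S.card, Step m (fun j => c (rot S r j)))
        ≤ ∑ r ∈ Finset.range S.card, N (Step m (fun j => c (rot S r j))) :=
      N_sum_le N hadd hsmul _ _
    have h2 : ∀ r ∈ Finset.range S.card,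
        N (Step m (fun j => c (rot S r j))) = N (Step m c) := by
      intro r _
      exact N_step_eq N hdist m _ c (fun a => card_filter_rot hsub r c a)
    rw [Finset.sum_congr rfl h2, Finset.sum_const, Finset.card_range, nsmul_eq_mul] at h1
    have habs : |(S.card : ℝ)⁻¹| = (S.card : ℝ)⁻¹ := abs_of_pos (by positivity)
    rw [habs]
    calc (S.card : ℝ)⁻¹ * N (∑ r ∈ Finset.range S.card, Step m (fun j => c (rot S r j)))
        ≤ (S.card : ℝ)⁻¹ * (S.card * N (Step m c)) := by
          apply mul_le_mul_of_nonneg_left h1 (by positivity)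
      _ = N (Step m c) := by field_simp

lemma floor_pow_div {t : ℝ} (ht : 0 ≤ t) {n' M : ℕ} (h : n' ≤ M) :
    ⌊t * 2 ^ n'⌋₊ = ⌊t * 2 ^ M⌋₊ / 2 ^ (M - n') := by
  rw [← Nat.floor_div_natCast (t * 2 ^ M) (2 ^ (M - n'))]
  congr 1
  push_cast
  rw [eq_div_iff (by positivity), mul_assoc, ← pow_add]
  congr 2
  omega

lemma mem_dyadic_floor {n' M i' : ℕ} (h : n' ≤ M) {t : ℝ} (ht : 0 ≤ t) :
    t ∈ dyadicI n' i' ↔ ((⌊t * 2 ^ M⌋₊ : ℝ) / 2 ^ M) ∈ dyadicI n' i' := by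
  have h0 : (0:ℝ) ≤ (⌊t * 2 ^ M⌋₊ : ℝ) / 2 ^ M := by positivity
  rw [mem_dyadicI ht, mem_dyadicI h0, floor_pow_div ht h,
    floor_pow_div h0 h]
  have e : ⌊(⌊t * 2 ^ M⌋₊ : ℝ) / 2 ^ M * 2 ^ M⌋₊ = ⌊t * 2 ^ M⌋₊ := by
    rw [div_mul_cancel₀ _ (by positivity : (2:ℝ)^M ≠ 0), Nat.floor_natCast]
  rw [e]

noncomputable def avgChain {n : ℕ} (T : Fin n → Finset ℕ) (c : ℕ → ℝ) : ℕ → (ℕ → ℝ)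
  | 0 => c
  | k+1 => if h : k < n then blockAvg (T ⟨k, h⟩) (avgChain T c k) else avgChain T c k

lemma avgChain_le (N : (ℝ → ℝ) → ℝ)
    (hadd : ∀ f g : ℝ → ℝ, N (f + g) ≤ N f + N g)
    (hsmul : ∀ (a : ℝ) (f : ℝ → ℝ), N (a • f) = |a| * N f)
    (hdist : ∀ f g : ℝ → ℝ, f ∈ HaarSpan → g ∈ HaarSpan →
      (∀ a : ℝ, volume {t ∈ Set.Ico (0 : ℝ) 1 | a < |f t|} =
        volume {t ∈ Set.Ico (0 : ℝ) 1 | a < |g t|}) → N f = N g)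
    {M n : ℕ} (T : Fin n → Finset ℕ) (hT : ∀ i, T i ⊆ Finset.range (2 ^ M))
    (c : ℕ → ℝ) : ∀ k, N (Step M (avgChain T c k)) ≤ N (Step M c)
  | 0 => le_refl _
  | k+1 => by
    rw [avgChain]
    split
    · exact le_trans (N_blockAvg_le N hadd hsmul hdist (hT _) _)
        (avgChain_le N hadd hsmul hdist T hT c k)
    · exact avgChain_le N hadd hsmul hdist T hT c k

lemma avgChain_of_not_mem {n : ℕ} {T : Fin n → Finset ℕ} {c : ℕ → ℝ} {j : ℕ}
    (k : ℕ) (hj : ∀ k' : Fin n, (k' : ℕ) < k → j ∉ T k') :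
    avgChain T c k j = c j := by
  induction k with
  | zero => rfl
  | succ k ih =>
    rw [avgChain]
    split
    · rename_i h
      rw [blockAvg, if_neg (hj ⟨k, h⟩ (Nat.lt_succ_self k))]
      exact ih (fun k' hk' => hj k' (Nat.lt_succ_of_lt hk'))
    · exact ih (fun k' hk' => hj k' (Nat.lt_succ_of_lt hk'))

lemma avgChain_stable {n : ℕ} {T : Fin n → Finset ℕ} {c : ℕ → ℝ} {j : ℕ} {k k' : ℕ}
    (hkk' : k ≤ k') (hj : ∀ i : Fin n, k ≤ (i : ℕ) → j ∉ T i) :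
    avgChain T c k' j = avgChain T c k j := by
  induction k' with
  | zero => rw [Nat.le_zero.mp hkk']
  | succ k' ih =>
    rcases Nat.lt_or_ge k (k'+1) with h | h
    · have hk : k ≤ k' := Nat.lt_succ_iff.mp h
      rw [avgChain]
      split
      · rename_i hn
        rw [blockAvg, if_neg (hj ⟨k', hn⟩ hk)]
        exact ih hk
      · exact ih hk
    · rw [Nat.le_antisymm hkk' h]

lemma avgChain_final {n : ℕ} {T : Fin n → Finset ℕ} {c : ℕ → ℝ} {j : ℕ}
    (hdisjT : ∀ i i' : Fin n, i ≠ i' → ∀ j', j' ∈ T i → j' ∉ T i')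
    (i : Fin n) (hj : j ∈ T i) :
    avgChain T c n j = (∑ j' ∈ T i, c j') / (T i).card := by
  have h1 : avgChain T c ((i : ℕ) + 1) j = (∑ j' ∈ T i, c j') / (T i).card := by
    rw [avgChain, dif_pos i.isLt]
    have hi : (⟨(i : ℕ), i.isLt⟩ : Fin n) = i := rfl
    rw [hi, blockAvg, if_pos hj]
    congr 1
    apply Finset.sum_congr rfl
    intro j' hj'
    apply avgChain_of_not_mem
    intro k' hk' hmem
    exact hdisjT i k' (fun hik => by rw [hik] at hk'; exact lt_irrefl _ hk') j' hj' hmem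
  rw [← h1]
  apply avgChain_stable i.isLt
  intro i' hi' hmem
  have : i ≠ i' := by
    intro hii'
    rw [← hii'] at hi'
    omega
  exact hdisjT i i' this j hj hmem

theorem condexp_bounded_in_haar_system_space (N : (ℝ → ℝ) → ℝ)
    (hadd : ∀ f g : ℝ → ℝ, N (f + g) ≤ N f + N g)
    (hsmul : ∀ (a : ℝ) (f : ℝ → ℝ), N (a • f) = |a| * N f)
    (hmono : ∀ f g : ℝ → ℝ, f ∈ HaarSpan → g ∈ HaarSpan →
      (∀ t, |f t| ≤ |g t|) → N f ≤ N g)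
    (hdist : ∀ f g : ℝ → ℝ, f ∈ HaarSpan → g ∈ HaarSpan →
      (∀ a : ℝ, volume {t ∈ Set.Ico (0 : ℝ) 1 | a < |f t|} =
        volume {t ∈ Set.Ico (0 : ℝ) 1 | a < |g t|}) → N f = N g)
    (hnorm : N ((Set.Ico (0 : ℝ) 1).indicator (fun _ => (1 : ℝ))) = 1)
    (n : ℕ) (A : Fin n → Set ℝ)
    (hdyadic : ∀ i, ∃ S : Finset (ℕ × ℕ), (∀ p ∈ S, p.2 < 2 ^ p.1) ∧
      A i = ⋃ p ∈ S, dyadicI p.1 p.2)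
    (hdisj : ∀ i j, i ≠ j → Disjoint (A i) (A j))
    (hcover : (⋃ i, A i) = Set.Ico (0 : ℝ) 1)
    (x : ℝ → ℝ) (hx : x ∈ HaarSpan) :
    N (fun t => ∑ i, (A i).indicator
        (fun _ => (∫ s in A i, x s) / (volume (A i)).toReal) t) ≤ N x := by
  classical
  obtain ⟨m₀, c₀, rfl⟩ := exists_step hx
  choose S hS1 hS2 using hdyadic
  set M := max m₀ (Finset.univ.sup fun i => (S i).sup Prod.fst) with hM
  have hm₀M : m₀ ≤ M := le_max_left _ _
  set c : ℕ → ℝ := fun j => c₀ (j / 2 ^ (M - m₀)) with hc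
  have hxs : Step m₀ c₀ = Step M c := step_refine hm₀M c₀
  set T : Fin n → Finset ℕ :=
    fun i => (Finset.range (2 ^ M)).filter (fun j => ((j : ℝ) / 2 ^ M) ∈ A i) with hT
  have hTsub : ∀ i, T i ⊆ Finset.range (2 ^ M) := fun i => Finset.filter_subset _ _
  have hAsub : ∀ i, A i ⊆ Set.Ico (0:ℝ) 1 := by
    intro i
    rw [← hcover]
    exact Set.subset_iUnion A i
  have hkey : ∀ i : Fin n, ∀ t : ℝ, 0 ≤ t →
      (t ∈ A i ↔ ((⌊t * 2 ^ M⌋₊ : ℝ) / 2 ^ M) ∈ A i) := by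
    intro i t ht
    have hle : ∀ p ∈ S i, p.1 ≤ M := by
      intro p hp
      calc p.1 ≤ (S i).sup Prod.fst := Finset.le_sup hp
        _ ≤ Finset.univ.sup (fun i => (S i).sup Prod.fst) :=
            Finset.le_sup (f := fun i => (S i).sup Prod.fst) (Finset.mem_univ i)
        _ ≤ M := le_max_right _ _
    rw [hS2 i]
    simp only [Set.mem_iUnion, exists_prop]
    constructor
    · rintro ⟨p, hp, hmem⟩
      exact ⟨p, hp, (mem_dyadic_floor (hle p hp) ht).mp hmem⟩
    · rintro ⟨p, hp, hmem⟩
      exact ⟨p, hp, (mem_dyadic_floor (hle p hp) ht).mpr hmem⟩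
  have hmemT : ∀ i : Fin n, ∀ t ∈ Set.Ico (0:ℝ) 1, (t ∈ A i ↔ ⌊t * 2 ^ M⌋₊ ∈ T i) := by
    intro i t ht
    simp only [hT, Finset.mem_filter, Finset.mem_range]
    constructor
    · intro h
      exact ⟨(mem_Ico_iff_floor ht.1).mp ht, (hkey i t ht.1).mp h⟩
    · rintro ⟨-, h⟩
      exact (hkey i t ht.1).mpr h
  have hdisjT : ∀ i i' : Fin n, i ≠ i' → ∀ j', j' ∈ T i → j' ∉ T i' := by
    intro i i' hii' j' h1 h2
    simp only [hT, Finset.mem_filter] at h1 h2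
    exact Set.disjoint_left.mp (hdisj i i' hii') h1.2 h2.2
  have hAeq : ∀ i, A i = ⋃ j ∈ T i, dyadicI M j := by
    intro i
    ext t
    simp only [Set.mem_iUnion, exists_prop]
    constructor
    · intro h
      have ht := hAsub i h
      exact ⟨⌊t * 2 ^ M⌋₊, (hmemT i t ht).mp h, (mem_dyadicI ht.1).mpr rfl⟩
    · rintro ⟨j, hjT, htj⟩
      have hj : j < 2 ^ M := Finset.mem_range.mp (hTsub i hjT)
      have ht := dyadicI_subset_Ico hj htj
      rw [hmemT i t ht, (mem_dyadicI ht.1).mp htj]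
      exact hjT
  have hvol : ∀ i, volume (A i) = (T i).card * ENNReal.ofReal ((2 ^ M : ℝ)⁻¹) := by
    intro i
    rw [hAeq i, measure_biUnion_finset (fun j _ j' _ h => disjoint_dyadicI h)
      (fun j _ => measurable_dyadicI M j)]
    simp only [volume_dyadicI]
    rw [Finset.sum_const, nsmul_eq_mul]
  have hint : ∀ i, (∫ s in A i, Step M c s) = ∑ j ∈ T i, c j * (2 ^ M : ℝ)⁻¹ := by
    intro i
    rw [hAeq i, integral_biUnion_finset (T i) (fun j _ => measurable_dyadicI M j)
      (fun j _ j' _ h => disjoint_dyadicI h)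
      (fun j _ => (integrable_step M c).integrableOn)]
    apply Finset.sum_congr rfl
    intro j hj
    exact integral_step_dyadic (Finset.mem_range.mp (hTsub i hj)) c
  rw [hxs]
  have hEeq : (fun t => ∑ i, (A i).indicator
      (fun _ => (∫ s in A i, Step M c s) / (volume (A i)).toReal) t)
      = Step M (avgChain T c n) := by
    funext t
    rw [step_apply]
    by_cases ht : t ∈ Set.Ico (0:ℝ) 1
    · rw [if_pos ht]
      have hKrange : ⌊t * 2 ^ M⌋₊ < 2 ^ M := (mem_Ico_iff_floor ht.1).mp ht
      have h1 : ((⌊t * 2 ^ M⌋₊ : ℝ)/2^M) ∈ Set.Ico (0:ℝ) 1 := by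
        constructor
        · positivity
        · rw [div_lt_one (by positivity)]
          exact_mod_cast hKrange
      have h2 : ((⌊t * 2 ^ M⌋₊ : ℝ)/2^M) ∈ ⋃ i, A i := hcover ▸ h1
      obtain ⟨i₀, hi₀⟩ := Set.mem_iUnion.mp h2
      have hKT : ⌊t * 2 ^ M⌋₊ ∈ T i₀ := by
        simp only [hT, Finset.mem_filter, Finset.mem_range]
        exact ⟨hKrange, hi₀⟩
      have htA : t ∈ A i₀ := (hmemT i₀ t ht).mpr hKT
      rw [Finset.sum_eq_single_of_mem i₀ (Finset.mem_univ i₀)]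
      · rw [Set.indicator_of_mem htA, hint i₀, hvol i₀,
          avgChain_final hdisjT i₀ hKT]
        have hcard : (0:ℝ) < (T i₀).card := by
          exact_mod_cast Finset.card_pos.mpr ⟨_, hKT⟩
        rw [← Finset.sum_mul, ENNReal.toReal_mul, ENNReal.toReal_natCast,
          ENNReal.toReal_ofReal (by positivity)]
        have h2M : (0:ℝ) < (2 ^ M : ℝ)⁻¹ := by positivity
        rw [mul_div_mul_right _ _ h2M.ne']
      · intro i _ hii₀
        apply Set.indicator_of_notMem
        intro hA
        exact (hdisjT i i₀ hii₀ _ ((hmemT i t ht).mp hA)) hKT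
    · rw [if_neg ht]
      apply Finset.sum_eq_zero
      intro i _
      exact Set.indicator_of_notMem (fun hA => ht (hAsub i hA)) _
  rw [hEeq]
  exact avgChain_le N hadd hsmul hdist T hTsub c n
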